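/- Let F₀ ∈ ℂ with F₀ ≠ −1, let Q : ℂ → ℂ be analytic in a neighborhood of F₀ with Q''(F₀) ≠ 0, and let x, t ∈ ℝ satisfy Q(F₀) = x·(F₀+1) − t·F₀. Then there exist δ > 0 and C > 0 such that for every α ∈ ℝ with |α − 1| ≤ δ and every F' ∈ ℂ with α⁻¹F' ≠ −1 and |α⁻¹F' − F₀| ≤ δ satisfying ((F'+1)/(α⁻¹F'+1))·Q(α⁻¹F') = x·(F'+1) − t·F', one has |α⁻¹F' − F₀| ≤ C·|α − 1|^{1/2}. -/

import Mathlib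

open Filter Topology

private lemma deriv2_eq_two_mul_coeff {f : ℂ → ℂ} {p : FormalMultilinearSeries ℂ ℂ ℂ} {z₀ : ℂ}
    (hp : HasFPowerSeriesAt f p z₀) : deriv (deriv f) z₀ = 2 * p.coeff 2 := by
  obtain ⟨r, hr⟩ := hp
  have h2 := hr.factorial_smul (1 : ℂ) 2
  have h3 : deriv (deriv f) z₀ = iteratedFDeriv ℂ 2 f z₀ (fun _ => 1) := by
    rw [← iteratedDeriv_eq_iteratedFDeriv, iteratedDeriv_succ, iteratedDeriv_one]
  have h4 : p 2 (fun _ => (1:ℂ)) = p.coeff 2 := rfl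
  rw [h4] at h2
  rw [h3, ← h2]
  simp [Nat.factorial]

private lemma quad_lower_bound {f : ℂ → ℂ} {z₀ : ℂ} (hf : AnalyticAt ℂ f z₀) (h0 : f z₀ = 0)
    (h2 : deriv (deriv f) z₀ ≠ 0) :
    ∃ δ > 0, ∃ c > 0, ∀ z : ℂ, ‖z - z₀‖ ≤ δ → c * ‖z - z₀‖ ^ 2 ≤ ‖f z‖ := by
  obtain ⟨p, hp⟩ := hf
  set g := dslope f z₀ with hgdef
  set H := dslope g z₀ with hHdef
  have hpg : HasFPowerSeriesAt g p.fslope z₀ := hp.has_fpower_series_dslope_fslope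
  have hpH : HasFPowerSeriesAt H p.fslope.fslope z₀ := hpg.has_fpower_series_dslope_fslope
  have ha2 : H z₀ ≠ 0 := by
    have hz : H z₀ = p.coeff 2 := by
      have hc := (hpH.coeff_zero (fun _ => 1)).symm
      rwa [show p.fslope.fslope 0 (fun _ => (1:ℂ)) = p.fslope.fslope.coeff 0 from rfl,
        FormalMultilinearSeries.coeff_fslope, FormalMultilinearSeries.coeff_fslope] at hc
    rw [hz]
    intro hc
    exact h2 (by rw [deriv2_eq_two_mul_coeff hp, hc, mul_zero])
  -- factorization valid everywhere
  have hfac : ∀ z : ℂ, f z = (z - z₀) * (g z₀ + (z - z₀) * H z) := by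
    intro z
    have e1 : (z - z₀) * g z = f z := by
      have := sub_smul_dslope f z₀ z; rw [h0, sub_zero] at this; simpa using this
    have e2 : (z - z₀) * H z = g z - g z₀ := by
      have := sub_smul_dslope g z₀ z; simpa using this
    rw [mul_add, e2]; rw [← e1]; ring
  -- continuity of H
  have hHc : ContinuousAt H z₀ := hpH.continuousAt
  obtain ⟨δ₀, hδ₀, hball⟩ : ∃ δ₀ > 0, ∀ z : ℂ, ‖z - z₀‖ ≤ δ₀ → ‖H z - H z₀‖ ≤ ‖H z₀‖ / 2 := by
    have hHpos : (0:ℝ) < ‖H z₀‖ := norm_pos_iff.mpr ha2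
    have := Metric.continuousAt_iff.mp hHc (‖H z₀‖ / 2) (half_pos hHpos)
    obtain ⟨ε, hε, hε'⟩ := this
    refine ⟨ε / 2, by positivity, fun z hz => ?_⟩
    have : dist z z₀ < ε := by
      rw [dist_eq_norm]; linarith
    exact le_of_lt (by simpa [dist_eq_norm] using hε' this)
  have hHlow : ∀ z : ℂ, ‖z - z₀‖ ≤ δ₀ → ‖H z₀‖ / 2 ≤ ‖H z‖ := by
    intro z hz
    have h1 := hball z hz
    have h3 := norm_sub_norm_le (H z₀) (H z)
    have : ‖H z₀ - H z‖ = ‖H z - H z₀‖ := norm_sub_rev _ _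
    linarith
  have hHhigh : ∀ z : ℂ, ‖z - z₀‖ ≤ δ₀ → ‖H z‖ ≤ 3 / 2 * ‖H z₀‖ := by
    intro z hz
    have h1 := hball z hz
    have he : H z = H z₀ + (H z - H z₀) := by ring
    have h3 := norm_add_le (H z₀) (H z - H z₀)
    rw [← he] at h3
    linarith
  have hHpos : (0:ℝ) < ‖H z₀‖ := norm_pos_iff.mpr ha2
  by_cases ha1 : g z₀ = 0
  · refine ⟨δ₀, hδ₀, ‖H z₀‖ / 2, half_pos hHpos, fun z hz => ?_⟩
    have := hHlow z hz
    rw [hfac z, ha1, zero_add]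
    rw [norm_mul, norm_mul]
    have hn : (0:ℝ) ≤ ‖z - z₀‖ := norm_nonneg _
    nlinarith [norm_nonneg (H z)]
  · set δ := min δ₀ (‖g z₀‖ / (3 * ‖H z₀‖)) with hδdef
    have hgpos : (0:ℝ) < ‖g z₀‖ := norm_pos_iff.mpr ha1
    have hδpos : 0 < δ := lt_min hδ₀ (div_pos hgpos (by positivity))
    refine ⟨δ, hδpos, ‖g z₀‖ / (2 * δ), div_pos hgpos (by positivity), fun z hz => ?_⟩
    have hz0 : ‖z - z₀‖ ≤ δ₀ := le_trans hz (min_le_left _ _)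
    have hz1 : ‖z - z₀‖ ≤ ‖g z₀‖ / (3 * ‖H z₀‖) := le_trans hz (min_le_right _ _)
    have hH : ‖H z‖ ≤ 3 / 2 * ‖H z₀‖ := hHhigh z hz0
    rw [hfac z, norm_mul]
    have hlow : ‖g z₀‖ / 2 ≤ ‖g z₀ + (z - z₀) * H z‖ := by
      have h4 : ‖g z₀‖ - ‖(z - z₀) * H z‖ ≤ ‖g z₀ + (z - z₀) * H z‖ := by
        have := norm_sub_norm_le (g z₀) (-((z - z₀) * H z))
        simpa [sub_neg_eq_add] using this
      have h5 : ‖(z - z₀) * H z‖ ≤ ‖g z₀‖ / 2 := by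
        rw [norm_mul]
        have : ‖z - z₀‖ * ‖H z‖ ≤ (‖g z₀‖ / (3 * ‖H z₀‖)) * (3 / 2 * ‖H z₀‖) := by
          apply mul_le_mul hz1 hH (norm_nonneg _) (by positivity)
        calc ‖z - z₀‖ * ‖H z‖ ≤ (‖g z₀‖ / (3 * ‖H z₀‖)) * (3 / 2 * ‖H z₀‖) := this
          _ = ‖g z₀‖ / 2 := by
            have hne : ‖H z₀‖ ≠ 0 := hHpos.ne'
            field_simp [hne]
      linarith
    have hzδ : ‖z - z₀‖ ≤ δ := hz
    have hn : (0:ℝ) ≤ ‖z - z₀‖ := norm_nonneg _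
    calc ‖g z₀‖ / (2 * δ) * ‖z - z₀‖ ^ 2 ≤ ‖g z₀‖ / (2 * δ) * (δ * ‖z - z₀‖) := by
          apply mul_le_mul_of_nonneg_left _ (by positivity)
          nlinarith
      _ = ‖z - z₀‖ * (‖g z₀‖ / 2) := by field_simp [hδpos.ne']
      _ ≤ ‖z - z₀‖ * ‖g z₀ + (z - z₀) * H z‖ := by
          apply mul_le_mul_of_nonneg_left hlow hn
/-- Any solution of the α-deformed equation that is moderately close to a solution `F₀`
of the undeformed equation (with `Q'' F₀ ≠ 0`) is within `C |α-1|^{1/2}` of it after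
rescaling by `α⁻¹`. -/
theorem stmt_6 (F₀ : ℂ) (hF₀ : F₀ ≠ -1) (Q : ℂ → ℂ) (hQ : AnalyticAt ℂ Q F₀)
    (hQ'' : deriv (deriv Q) F₀ ≠ 0) (x t : ℝ)
    (h : Q F₀ = (x : ℂ) * (F₀ + 1) - (t : ℂ) * F₀) :
    ∃ δ > 0, ∃ C > 0, ∀ α : ℝ, |α - 1| ≤ δ → ∀ F' : ℂ,
      ((α : ℂ))⁻¹ * F' ≠ -1 → ‖(α : ℂ)⁻¹ * F' - F₀‖ ≤ δ →
      ((F' + 1) / ((α : ℂ)⁻¹ * F' + 1)) * Q ((α : ℂ)⁻¹ * F')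
        = (x : ℂ) * (F' + 1) - (t : ℂ) * F' →
      ‖(α : ℂ)⁻¹ * F' - F₀‖ ≤ C * Real.sqrt |α - 1| := by
  have hne : F₀ + 1 ≠ 0 := fun hc => hF₀ (by linear_combination hc)
  set G : ℂ → ℂ := fun u => Q u + ((t:ℂ) - x) * u - x with hGdef
  have hGa : AnalyticAt ℂ G F₀ :=
    ((hQ.add ((analyticAt_const (v := (t:ℂ) - x)).mul analyticAt_id)).sub analyticAt_const)
  have hG0 : G F₀ = 0 := by simp only [hGdef]; linear_combination h
  have hev : deriv G =ᶠ[nhds F₀] fun u => deriv Q u + ((t:ℂ) - x) := by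
    filter_upwards [hQ.eventually_analyticAt] with u hu
    have hd : DifferentiableAt ℂ Q u := hu.differentiableAt
    have : HasDerivAt (fun u => Q u + ((t:ℂ) - x) * u - (x:ℂ)) (deriv Q u + ((t:ℂ) - x)) u := by
      simpa using ((hd.hasDerivAt.add ((hasDerivAt_id u).const_mul ((t:ℂ) - x))).sub_const (x:ℂ))
    exact this.deriv
  have hG2 : deriv (deriv G) F₀ ≠ 0 := by
    rw [hev.deriv_eq, deriv_add_const]
    exact hQ''
  obtain ⟨δ₁, hδ₁, c, hc, hlow⟩ := quad_lower_bound hGa hG0 hG2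
  set R : ℂ → ℂ := fun u => u * (((x:ℂ) - t) * (u + 1) - Q u) / (u + 1) with hRdef
  have hRc : ContinuousAt R F₀ :=
    ((continuousAt_id.mul ((continuousAt_const.mul (continuousAt_id.add continuousAt_const)).sub
      hQ.continuousAt))).div (continuousAt_id.add continuousAt_const) hne
  set M : ℝ := ‖R F₀‖ + 1 with hMdef
  have hM : 0 < M := by positivity
  obtain ⟨δ₂, hδ₂, hRb⟩ : ∃ δ₂ > 0, ∀ u : ℂ, ‖u - F₀‖ ≤ δ₂ → ‖R u‖ ≤ M := by
    obtain ⟨ε, hε, hε'⟩ := Metric.continuousAt_iff.mp hRc 1 one_pos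
    refine ⟨ε / 2, by positivity, fun u hu => ?_⟩
    have hd : dist u F₀ < ε := by rw [dist_eq_norm]; linarith
    have := hε' hd
    rw [dist_eq_norm] at this
    have h3 := norm_add_le (R F₀) (R u - R F₀)
    have he : R u = R F₀ + (R u - R F₀) := by ring
    rw [← he] at h3
    linarith [le_of_lt this]
  refine ⟨min (min δ₁ δ₂) (1/2), by positivity, Real.sqrt (M / c),
    Real.sqrt_pos.mpr (by positivity), fun α hα F' hne1 hclose heq => ?_⟩
  set u : ℂ := (α:ℂ)⁻¹ * F' with hu
  have hα2 : |α - 1| ≤ 1/2 := le_trans hα (min_le_right _ _)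
  have hαpos : (0:ℝ) < α := by
    rcases abs_le.mp hα2 with ⟨h1, _⟩; linarith
  have hαne : (α:ℂ) ≠ 0 := by exact_mod_cast hαpos.ne'
  have hu1 : u + 1 ≠ 0 := fun hc => hne1 (by linear_combination hc)
  have hF' : F' = (α:ℂ) * u := by rw [hu]; field_simp
  have key : G u = ((α:ℂ) - 1) * R u := by
    rw [hF'] at heq
    rw [hGdef, hRdef]
    simp only
    rw [div_mul_eq_mul_div, div_eq_iff hu1] at heq
    field_simp [hu1]
    linear_combination heq
  have hGnorm : ‖G u‖ ≤ |α - 1| * M := by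
    rw [key, norm_mul]
    have h1 : ‖(α:ℂ) - 1‖ = |α - 1| := by
      rw [show (α:ℂ) - 1 = ((α - 1 : ℝ) : ℂ) by push_cast; ring, Complex.norm_real,
        Real.norm_eq_abs]
    rw [h1]
    exact mul_le_mul_of_nonneg_left (hRb u (le_trans hclose (le_trans (min_le_left _ _)
      (min_le_right _ _)))) (abs_nonneg _)
  have hquad : c * ‖u - F₀‖ ^ 2 ≤ ‖G u‖ :=
    hlow u (le_trans hclose (le_trans (min_le_left _ _) (min_le_left _ _)))
  have hsq : ‖u - F₀‖ ^ 2 ≤ M / c * |α - 1| := by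
    rw [div_mul_eq_mul_div, le_div_iff₀ hc]
    nlinarith
  calc ‖u - F₀‖ = Real.sqrt (‖u - F₀‖ ^ 2) := (Real.sqrt_sq (norm_nonneg _)).symm
    _ ≤ Real.sqrt (M / c * |α - 1|) := Real.sqrt_le_sqrt hsq
    _ = Real.sqrt (M / c) * Real.sqrt |α - 1| := Real.sqrt_mul (by positivity) _
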